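/- arXiv:0908.3302 — 5 statements merged into one kernel-verified Lean document; each statement's English description precedes it below -/
import Mathlib

section
/- Let s_i be a simple root of a reduced root system R whose simple system S is a basis of V, and let R^i = {w s_i : w ∈ W} be its orbit under the reflection group W. Then s_i is the only simple root lying in R^i if and only if for every ε > 0 the following set equality holds: ⋃_{w ∈ W} {x ∈ w C̄ : 0 ≤ ⟨w s_i, x⟩ ≤ ε} = ⋃_{α ∈ R^i ∩ R_+} {x ∈ V : |⟨α, x⟩| ≤ ε}. -/
open scoped RealInnerProductSpace

/-- The reflection `σ_α` in the hyperplane orthogonal to `α`: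
`σ_α (v) = v - 2 (⟪α, v⟫ / ⟪α, α⟫) • α`. -/
noncomputable def rootReflection {V : Type*} [NormedAddCommGroup V]
    [InnerProductSpace ℝ V] (α : V) (v : V) : V :=
  v - (2 * ⟪α, v⟫ / ⟪α, α⟫) • α

namespace RRAux

variable {V : Type*} [NormedAddCommGroup V] [InnerProductSpace ℝ V]

lemma inner_self_pos' {α : V} (hα : α ≠ 0) : 0 < ⟪α, α⟫ :=
  lt_of_le_of_ne real_inner_self_nonneg (fun h => hα (inner_self_eq_zero.1 h.symm))

/-- the reflection as a linear isometry equivalence -/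
noncomputable def sigma [FiniteDimensional ℝ V] (α : V) : V ≃ₗᵢ[ℝ] V :=
  (Submodule.reflection (ℝ ∙ α)).trans (LinearIsometryEquiv.neg ℝ)

lemma sigma_apply [FiniteDimensional ℝ V] (α v : V) :
    sigma α v = rootReflection α v := by
  have h := Submodule.reflection_apply (K := (ℝ ∙ α)) v
  have h2 := Submodule.starProjection_singleton (𝕜 := ℝ) (v := α) v
  have : sigma α v = -(Submodule.reflection (ℝ ∙ α) v) := rfl
  rw [this, h, h2, rootReflection, real_inner_self_eq_norm_sq, two_smul]
  match_scalars <;> (try simp only [RCLike.ofReal_real_eq_id, id_eq]) <;> ring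

lemma rootReflection_invol (α : V) (hα : α ≠ 0) (v : V) :
    rootReflection α (rootReflection α v) = v := by
  have hne : ⟪α, α⟫ ≠ 0 := ne_of_gt (inner_self_pos' hα)
  simp only [rootReflection, inner_sub_right, real_inner_smul_right]
  match_scalars <;> field_simp <;> ring

lemma rootReflection_self (α : V) (hα : α ≠ 0) : rootReflection α α = -α := by
  have hne : ⟪α, α⟫ ≠ 0 := ne_of_gt (inner_self_pos' hα)
  simp only [rootReflection]
  rw [mul_div_assoc, div_self hne]
  module

lemma rootReflection_neg (α v : V) : rootReflection (-α) v = rootReflection α v := by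
  simp only [rootReflection, inner_neg_left, inner_neg_right, neg_neg, smul_neg, neg_smul,
    mul_neg, neg_div, neg_neg]

lemma rootReflection_of_inner_zero (α v : V) (h : ⟪α, v⟫ = 0) :
    rootReflection α v = v := by
  simp [rootReflection, h]

end RRAux

open RRAux

/-- Bundled hypotheses of the main theorem. -/
structure RSys (V : Type*) [NormedAddCommGroup V] [InnerProductSpace ℝ V] (n : ℕ) where
  R : Finset V
  hR0 : (0 : V) ∉ R
  hRrefl : ∀ α ∈ R, rootReflection α '' (R : Set V) = (R : Set V)
  hRred : ∀ α ∈ R, {x : V | ∃ c : ℝ, x = c • α} ∩ (R : Set V) = {α, -α}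
  s : Module.Basis (Fin n) ℝ V
  hsR : ∀ j, s j ∈ R
  hsimple : ∀ α ∈ R, (∀ j, 0 ≤ s.repr α j) ∨ (∀ j, s.repr α j ≤ 0)

namespace RSys

variable {V : Type*} [NormedAddCommGroup V] [InnerProductSpace ℝ V] {n : ℕ}

theorem fd (P : RSys V n) : FiniteDimensional ℝ V := Module.Finite.of_basis P.s

variable (P : RSys V n)

/-- The reflection group. -/
def W : Subgroup (V ≃ₗᵢ[ℝ] V) :=
  Subgroup.closure {g : V ≃ₗᵢ[ℝ] V | ∃ α ∈ P.R, ∀ v, g v = rootReflection α v}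

/-- Reflection in a root, as an element of the isometry group. -/
noncomputable def sg (α : V) : V ≃ₗᵢ[ℝ] V :=
  haveI := P.fd
  sigma α

lemma sg_apply (α v : V) : P.sg α v = rootReflection α v := by
  haveI := P.fd
  exact sigma_apply α v

lemma root_ne_zero {α : V} (hα : α ∈ P.R) : α ≠ 0 := fun h => P.hR0 (h ▸ hα)

lemma neg_mem {α : V} (hα : α ∈ P.R) : -α ∈ P.R := by
  have h := P.hRred α hα
  have : (-α) ∈ ({x : V | ∃ c : ℝ, x = c • α} ∩ (P.R : Set V)) := by
    rw [h]; simp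
  exact this.2

lemma smul_mem_eq {α : V} (hα : α ∈ P.R) {β : V} (hβ : β ∈ P.R) {c : ℝ} (h : β = c • α) :
    β = α ∨ β = -α := by
  have h2 := P.hRred α hα
  have : β ∈ ({x : V | ∃ c : ℝ, x = c • α} ∩ (P.R : Set V)) := ⟨⟨c, h⟩, hβ⟩
  rw [h2] at this
  simpa using this

lemma sg_mem_W {α : V} (hα : α ∈ P.R) : P.sg α ∈ P.W :=
  Subgroup.subset_closure ⟨α, hα, P.sg_apply α⟩

lemma sg_mul_self {α : V} (hα : α ≠ 0) : P.sg α * P.sg α = 1 := by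
  ext v
  have : (P.sg α * P.sg α) v = P.sg α (P.sg α v) := rfl
  rw [this, P.sg_apply, P.sg_apply, rootReflection_invol α hα v]
  rfl

lemma sg_symm {α : V} (hα : α ≠ 0) : (P.sg α)⁻¹ = P.sg α :=
  inv_eq_of_mul_eq_one_left (P.sg_mul_self hα)

lemma sg_self {α : V} (hα : α ≠ 0) : P.sg α α = -α := by
  rw [P.sg_apply, rootReflection_self α hα]

lemma sg_neg (α : V) : P.sg (-α) = P.sg α := by
  ext v
  rw [P.sg_apply, P.sg_apply, rootReflection_neg]

/-- conjugation: `σ_{g α} = g σ_α g⁻¹`. -/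
lemma sg_conj (g : V ≃ₗᵢ[ℝ] V) (α : V) : P.sg (g α) = g * P.sg α * g⁻¹ := by
  ext v
  have h1 : (g * P.sg α * g⁻¹) v = g (P.sg α (g.symm v)) := rfl
  rw [h1, P.sg_apply, P.sg_apply]
  have e1 : ⟪α, g.symm v⟫ = ⟪g α, v⟫ := by
    rw [← g.inner_map_map α (g.symm v), g.apply_symm_apply]
  have e2 : ⟪g α, g α⟫ = ⟪α, α⟫ := g.inner_map_map α α
  simp only [rootReflection, map_sub, map_smul, g.apply_symm_apply, e1, e2]

lemma W_maps {w : V ≃ₗᵢ[ℝ] V} (hw : w ∈ P.W) : ∀ α ∈ P.R, w α ∈ P.R := by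
  have key : ∀ w ∈ P.W, (∀ α ∈ P.R, w α ∈ P.R) ∧ (∀ α ∈ P.R, w.symm α ∈ P.R) := by
    intro w hw
    induction hw using Subgroup.closure_induction with
    | mem g hg =>
      obtain ⟨α, hα, hgα⟩ := hg
      have hα0 : α ≠ 0 := P.root_ne_zero hα
      have hfwd : ∀ β ∈ P.R, g β ∈ P.R := by
        intro β hβ
        have h3 : g β ∈ rootReflection α '' (P.R : Set V) := ⟨β, hβ, (hgα β).symm⟩
        rw [P.hRrefl α hα] at h3
        exact h3
      refine ⟨hfwd, ?_⟩
      intro β hβ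
      have hinv : ∀ v, g (g v) = v := by
        intro v; rw [hgα, hgα, rootReflection_invol α hα0]
      have : g.symm β = g β := by
        have := hinv β
        calc g.symm β = g.symm (g (g β)) := by rw [hinv]
        _ = g β := g.symm_apply_apply _
      rw [this]; exact hfwd β hβ
    | one => exact ⟨fun α hα => hα, fun α hα => hα⟩
    | mul x y hx hy ihx ihy =>
      refine ⟨fun α hα => ?_, fun α hα => ?_⟩
      · exact ihx.1 _ (ihy.1 α hα)
      · exact ihy.2 _ (ihx.2 α hα)
    | inv x hx ih => exact ⟨ih.2, ih.1⟩
  exact (key w hw).1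

lemma W_symm_mem {w : V ≃ₗᵢ[ℝ] V} (hw : w ∈ P.W) : w.symm ∈ P.W := by
  have : w⁻¹ ∈ P.W := inv_mem hw
  exact this

lemma W_finite : (P.W : Set (V ≃ₗᵢ[ℝ] V)).Finite := by
  haveI := P.fd
  haveI : Fintype (P.R : Set V) := FinsetCoe.fintype P.R
  rw [← Set.finite_coe_iff]
  refine Finite.of_injective
    (fun w : (P.W : Set (V ≃ₗᵢ[ℝ] V)) =>
      (fun a : (P.R : Set V) => (⟨w.1 a.1, P.W_maps w.2 a.1 a.2⟩ : (P.R : Set V)))) ?_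
  intro w w' h
  have hagree : ∀ α ∈ P.R, w.1 α = w'.1 α := by
    intro α hα
    have := congrFun h ⟨α, hα⟩
    exact Subtype.ext_iff.1 this
  apply Subtype.ext
  have hlin : (w.1 : V →ₗ[ℝ] V) = (w'.1 : V →ₗ[ℝ] V) := by
    apply Module.Basis.ext P.s
    intro j
    exact hagree (P.s j) (P.hsR j)
  ext v
  exact LinearMap.congr_fun hlin v


/-- positivity of a root -/
def pos (β : V) : Prop := β ∈ P.R ∧ ∀ k, 0 ≤ P.s.repr β k

lemma pos_or {β : V} (hβ : β ∈ P.R) : P.pos β ∨ P.pos (-β) := by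
  rcases P.hsimple β hβ with h | h
  · exact Or.inl ⟨hβ, h⟩
  · refine Or.inr ⟨P.neg_mem hβ, fun k => ?_⟩
    rw [map_neg]
    simpa using h k

lemma not_pos_both {β : V} : ¬ (P.pos β ∧ P.pos (-β)) := by
  rintro ⟨⟨hβ, h1⟩, ⟨-, h2⟩⟩
  have hz : ∀ k, P.s.repr β k = 0 := by
    intro k
    have h2' := h2 k
    rw [map_neg] at h2'
    simp only [Finsupp.neg_apply, neg_nonneg] at h2'
    exact le_antisymm h2' (h1 k)
  have : β = 0 := by
    have : P.s.repr β = 0 := Finsupp.ext hz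
    simpa [this] using (P.s.sum_repr β).symm
  exact P.hR0 (this ▸ hβ)

lemma inner_eq_sum (β x : V) : ⟪β, x⟫ = ∑ k, P.s.repr β k * ⟪P.s k, x⟫ := by
  conv_lhs => rw [← P.s.sum_repr β]
  rw [sum_inner]
  simp [real_inner_smul_left]

lemma pos_inner_nonneg {β : V} (hβ : P.pos β) {x : V} (hx : ∀ k, 0 ≤ ⟪P.s k, x⟫) :
    0 ≤ ⟪β, x⟫ := by
  rw [P.inner_eq_sum]
  exact Finset.sum_nonneg fun k _ => mul_nonneg (hβ.2 k) (hx k)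

lemma exists_inner_eq (f : Fin n → ℝ) : ∃ δ : V, ∀ k, ⟪P.s k, δ⟫ = f k := by
  haveI := P.fd
  set L : V →ₗ[ℝ] (Fin n → ℝ) := LinearMap.pi (fun k => (innerSL ℝ (P.s k)).toLinearMap) with hL
  have hLapp : ∀ v k, L v k = ⟪P.s k, v⟫ := fun v k => rfl
  have hinj : Function.Injective L := by
    rw [← LinearMap.ker_eq_bot]
    apply (Submodule.eq_bot_iff _).2
    intro v hv
    have hv' : ∀ k, ⟪P.s k, v⟫ = 0 := by
      intro k
      have := congrFun (LinearMap.mem_ker.1 hv) k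
      simpa [hLapp] using this
    have : ⟪v, v⟫ = 0 := by rw [P.inner_eq_sum]; simp [hv']
    exact inner_self_eq_zero.1 this
  have hsurj : Function.Surjective L := by
    have h1 : Module.finrank ℝ V = Module.finrank ℝ (Fin n → ℝ) := by
      rw [Module.finrank_eq_card_basis P.s, Module.finrank_fintype_fun_eq_card]
    exact (LinearMap.injective_iff_surjective_of_finrank_eq_finrank h1).1 hinj
  obtain ⟨δ, hδ⟩ := hsurj f
  exact ⟨δ, fun k => by rw [← hLapp δ k, hδ]⟩

lemma sg_sub_form (α v : V) : P.sg α v = v - (2 * ⟪α, v⟫ / ⟪α, α⟫) • α := by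
  rw [P.sg_apply]; rfl

lemma covering (x : V) : ∃ w ∈ P.W, ∀ k, 0 ≤ ⟪P.s k, w.symm x⟫ := by
  obtain ⟨δ, hδ⟩ := P.exists_inner_eq (fun _ => 1)
  have hfin := P.W_finite
  have hne : hfin.toFinset.Nonempty := ⟨1, (Set.Finite.mem_toFinset hfin).2 (one_mem _)⟩
  obtain ⟨w, hwF, hmax⟩ := hfin.toFinset.exists_max_image (fun w => ⟪x, w δ⟫) hne
  have hwW : w ∈ P.W := (Set.Finite.mem_toFinset hfin).1 hwF
  refine ⟨w, hwW, fun k => ?_⟩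
  have hk : P.sg (P.s k) ∈ P.W := P.sg_mem_W (P.hsR k)
  have hmem : w * P.sg (P.s k) ∈ hfin.toFinset :=
    (Set.Finite.mem_toFinset hfin).2 (mul_mem hwW hk)
  have h2 := hmax _ hmem
  have h3 : (w * P.sg (P.s k)) δ = w (P.sg (P.s k) δ) := rfl
  have hsk0 : (P.s k) ≠ 0 := P.root_ne_zero (P.hsR k)
  have hippos : 0 < ⟪P.s k, P.s k⟫ := inner_self_pos' hsk0
  set c : ℝ := 2 * ⟪P.s k, δ⟫ / ⟪P.s k, P.s k⟫ with hc
  have hcpos : 0 < c := by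
    rw [hc, hδ k]
    positivity
  have h4 : P.sg (P.s k) δ = δ - c • P.s k := P.sg_sub_form _ _
  rw [h3, h4, map_sub, map_smul, inner_sub_right, real_inner_smul_right] at h2
  have h5 : 0 ≤ ⟪x, w (P.s k)⟫ := by nlinarith
  have h6 : ⟪P.s k, w.symm x⟫ = ⟪w (P.s k), x⟫ := by
    rw [← w.inner_map_map (P.s k) (w.symm x), w.apply_symm_apply]
  rw [h6, real_inner_comm]
  exact h5

/-- products of simple reflections along a word -/
noncomputable def prodW (l : List (Fin n)) : V ≃ₗᵢ[ℝ] V :=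
  (l.map (fun j => P.sg (P.s j))).prod

lemma prodW_nil : P.prodW ([] : List (Fin n)) = 1 := rfl

lemma prodW_cons (a : Fin n) (l : List (Fin n)) :
    P.prodW (a :: l) = P.sg (P.s a) * P.prodW l := by
  simp [prodW]

lemma prodW_append (l₁ l₂ : List (Fin n)) :
    P.prodW (l₁ ++ l₂) = P.prodW l₁ * P.prodW l₂ := by
  simp [prodW]

lemma prodW_singleton (a : Fin n) : P.prodW [a] = P.sg (P.s a) := by
  simp [prodW]

lemma prodW_mem_W (l : List (Fin n)) : P.prodW l ∈ P.W := by
  induction l with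
  | nil => exact one_mem _
  | cons a t ih => rw [P.prodW_cons]; exact mul_mem (P.sg_mem_W (P.hsR a)) ih

lemma prodW_reverse (l : List (Fin n)) : P.prodW l.reverse = (P.prodW l)⁻¹ := by
  induction l with
  | nil => simp [P.prodW_nil]
  | cons a t ih =>
    rw [List.reverse_cons, P.prodW_append, P.prodW_cons, P.prodW_nil, mul_one, ih,
      P.prodW_cons, mul_inv_rev, P.sg_symm (P.root_ne_zero (P.hsR a))]


/-- A simple reflection keeps positive roots other than the simple root itself positive. -/
lemma sigma_pos {β : V} (hβ : P.pos β) (a : Fin n) (hne : β ≠ P.s a) :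
    P.pos (P.sg (P.s a) β) := by
  obtain ⟨hβR, hβpos⟩ := hβ
  have hsa := P.hsR a
  have hs0 := P.root_ne_zero hsa
  have hβ' : P.sg (P.s a) β ∈ P.R := P.W_maps (P.sg_mem_W hsa) β hβR
  set c : ℝ := 2 * ⟪P.s a, β⟫ / ⟪P.s a, P.s a⟫ with hc
  have hform : P.sg (P.s a) β = β - c • P.s a := P.sg_sub_form _ _
  have hrepr : ∀ k, k ≠ a → P.s.repr (P.sg (P.s a) β) k = P.s.repr β k := by
    intro k hk
    rw [hform, map_sub, map_smul]
    simp [P.s.repr_self, Finsupp.single_apply, (Ne.symm hk)]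
  have hk0 : ∃ k, k ≠ a ∧ 0 < P.s.repr β k := by
    by_contra h
    push_neg at h
    have hz : ∀ k, k ≠ a → P.s.repr β k = 0 := fun k hk =>
      le_antisymm (h k hk) (hβpos k)
    have hba : β = P.s.repr β a • P.s a := by
      conv_lhs => rw [← P.s.sum_repr β]
      rw [Finset.sum_eq_single a]
      · intro k _ hk
        rw [hz k hk, zero_smul]
      · intro ha
        exact absurd (Finset.mem_univ a) ha
    rcases P.smul_mem_eq hsa hβR hba with h1 | h1
    · exact hne h1
    · have hra : P.s.repr β a = -1 := by
        rw [h1]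
        simp [map_neg, P.s.repr_self]
      have := hβpos a
      rw [hra] at this
      linarith
  obtain ⟨k0, hk0a, hk0pos⟩ := hk0
  rcases P.hsimple _ hβ' with h | h
  · exact ⟨hβ', h⟩
  · exfalso
    have hcontr := h k0
    rw [hrepr k0 hk0a] at hcontr
    linarith

/-- Deletion lemma. -/
lemma deletion : ∀ (l : List (Fin n)) (j : Fin n),
    P.pos (-(P.prodW l (P.s j))) →
    ∃ l' : List (Fin n), l'.length + 1 = l.length ∧ P.prodW l' = P.prodW l * P.sg (P.s j) := by
  intro l
  induction l with
  | nil =>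
    intro j hneg
    exfalso
    rw [P.prodW_nil] at hneg
    refine P.not_pos_both ⟨⟨P.hsR j, ?_⟩, hneg⟩
    intro k
    simp only [P.s.repr_self, Finsupp.single_apply]
    split <;> norm_num
  | cons a t ih =>
    intro j hneg
    have hγR : P.prodW t (P.s j) ∈ P.R := P.W_maps (P.prodW_mem_W t) _ (P.hsR j)
    have happ : P.prodW (a :: t) (P.s j) = P.sg (P.s a) (P.prodW t (P.s j)) := by
      rw [P.prodW_cons]; rfl
    rcases P.pos_or hγR with hp | hp
    · -- γ positive; since σ_a γ is negative, γ = s a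
      have hγa : P.prodW t (P.s j) = P.s a := by
        by_contra hne
        have := P.sigma_pos hp a hne
        rw [← happ] at this
        exact P.not_pos_both ⟨this, hneg⟩
      -- σ_a ∘ prodW t = prodW t ∘ σ_j
      have hconj : P.sg (P.s a) = P.prodW t * P.sg (P.s j) * (P.prodW t)⁻¹ := by
        rw [← hγa]
        exact P.sg_conj (P.prodW t) (P.s j)
      refine ⟨t, by simp, ?_⟩
      rw [P.prodW_cons, hconj, inv_mul_cancel_right, mul_assoc,
        P.sg_mul_self (P.root_ne_zero (P.hsR j)), mul_one]
    · -- -γ positive: use IH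
      obtain ⟨t', ht'len, ht'eq⟩ := ih j hp
      refine ⟨a :: t', by simp [ht'len], ?_⟩
      rw [P.prodW_cons, ht'eq, P.prodW_cons, mul_assoc]


lemma sg_sg {α : V} (hα : α ≠ 0) (v : V) : P.sg α (P.sg α v) = v := by
  rw [P.sg_apply, P.sg_apply, rootReflection_invol α hα]

lemma key_step {β : V} (hβ : P.pos β) (hns : ∀ k, β ≠ P.s k) :
    ∃ j : Fin n, ∃ c : ℝ, 0 < c ∧ P.sg (P.s j) β = β - c • P.s j ∧
      P.pos (P.sg (P.s j) β) := by
  have hβ0 : β ≠ 0 := P.root_ne_zero hβ.1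
  have hpos : 0 < ⟪β, β⟫ := inner_self_pos' hβ0
  have hex : ∃ j, 0 < P.s.repr β j * ⟪P.s j, β⟫ := by
    by_contra h
    push_neg at h
    have : ⟪β, β⟫ ≤ 0 := by
      rw [P.inner_eq_sum β β]
      exact Finset.sum_nonpos fun k _ => h k
    linarith
  obtain ⟨j, hj⟩ := hex
  have hinnerpos : 0 < ⟪P.s j, β⟫ := by
    rcases lt_trichotomy (⟪P.s j, β⟫) 0 with h | h | h
    · exfalso; nlinarith [hβ.2 j]
    · rw [h, mul_zero] at hj; exact absurd hj (lt_irrefl 0)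
    · exact h
  have hsj0 := P.root_ne_zero (P.hsR j)
  have hss := inner_self_pos' hsj0
  exact ⟨j, 2 * ⟪P.s j, β⟫ / ⟪P.s j, P.s j⟫, by positivity, P.sg_sub_form _ _,
    P.sigma_pos hβ j (hns j)⟩

lemma measure_lt {δ : V} (hδ : ∀ k, ⟪P.s k, δ⟫ = 1) {β : V} (hβ : P.pos β)
    {j : Fin n} {c : ℝ} (hc : 0 < c) (hform : P.sg (P.s j) β = β - c • P.s j)
    (hβ' : P.pos (P.sg (P.s j) β)) :
    (P.R.filter (fun γ => ⟪γ, δ⟫ < ⟪P.sg (P.s j) β, δ⟫)).card <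
      (P.R.filter (fun γ => ⟪γ, δ⟫ < ⟪β, δ⟫)).card := by
  classical
  have hlt : ⟪P.sg (P.s j) β, δ⟫ < ⟪β, δ⟫ := by
    rw [hform, inner_sub_left, real_inner_smul_left, hδ j]
    nlinarith
  apply Finset.card_lt_card
  constructor
  · intro γ hγ
    rw [Finset.mem_filter] at hγ ⊢
    exact ⟨hγ.1, lt_trans hγ.2 hlt⟩
  · intro hsub
    have : P.sg (P.s j) β ∈ P.R.filter (fun γ => ⟪γ, δ⟫ < ⟪β, δ⟫) :=
      Finset.mem_filter.2 ⟨hβ'.1, hlt⟩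
    have := hsub this
    rw [Finset.mem_filter] at this
    exact absurd this.2 (lt_irrefl _)

lemma pos_root_word {β : V} (hβ : P.pos β) :
    ∃ (l : List (Fin n)) (k : Fin n), P.prodW l (P.s k) = β := by
  classical
  obtain ⟨δ, hδ⟩ := P.exists_inner_eq (fun _ => 1)
  suffices h : ∀ (N : ℕ) (β : V), P.pos β →
      (P.R.filter (fun γ => ⟪γ, δ⟫ < ⟪β, δ⟫)).card ≤ N →
      ∃ (l : List (Fin n)) (k : Fin n), P.prodW l (P.s k) = β from h _ β hβ le_rfl
  intro N
  induction N with
  | zero =>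
    intro β hβ hcard
    by_cases hsimp : ∃ k, β = P.s k
    · obtain ⟨k, hk⟩ := hsimp
      exact ⟨[], k, by rw [P.prodW_nil]; exact hk.symm⟩
    · push_neg at hsimp
      obtain ⟨j, c, hc, hform, hβ'⟩ := P.key_step hβ hsimp
      have := P.measure_lt hδ hβ hc hform hβ'
      omega
  | succ N ih =>
    intro β hβ hcard
    by_cases hsimp : ∃ k, β = P.s k
    · obtain ⟨k, hk⟩ := hsimp
      exact ⟨[], k, by rw [P.prodW_nil]; exact hk.symm⟩
    · push_neg at hsimp
      obtain ⟨j, c, hc, hform, hβ'⟩ := P.key_step hβ hsimp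
      have hm := P.measure_lt hδ hβ hc hform hβ'
      obtain ⟨l, k, hlk⟩ := ih (P.sg (P.s j) β) hβ' (by omega)
      refine ⟨j :: l, k, ?_⟩
      rw [P.prodW_cons]
      have : (P.sg (P.s j) * P.prodW l) (P.s k) = P.sg (P.s j) (P.prodW l (P.s k)) := rfl
      rw [this, hlk, P.sg_sg (P.root_ne_zero (P.hsR j))]

lemma mem_W_word {w : V ≃ₗᵢ[ℝ] V} (hw : w ∈ P.W) : ∃ l : List (Fin n), P.prodW l = w := by
  induction hw using Subgroup.closure_induction with
  | mem g hg =>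
    obtain ⟨α, hα, hgα⟩ := hg
    have hgsg : g = P.sg α := by
      ext v
      rw [hgα, P.sg_apply]
    rcases P.pos_or hα with hp | hp
    · obtain ⟨l, k, hlk⟩ := P.pos_root_word hp
      refine ⟨l ++ [k] ++ l.reverse, ?_⟩
      rw [P.prodW_append, P.prodW_append, P.prodW_singleton, P.prodW_reverse, hgsg, ← hlk,
        P.sg_conj]
    · obtain ⟨l, k, hlk⟩ := P.pos_root_word hp
      refine ⟨l ++ [k] ++ l.reverse, ?_⟩
      rw [P.prodW_append, P.prodW_append, P.prodW_singleton, P.prodW_reverse, hgsg,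
        ← P.sg_neg α, ← hlk, P.sg_conj]
  | one => exact ⟨[], rfl⟩
  | mul x y hx hy ihx ihy =>
    obtain ⟨l, hl⟩ := ihx
    obtain ⟨l', hl'⟩ := ihy
    exact ⟨l ++ l', by rw [P.prodW_append, hl, hl']⟩
  | inv x hx ih =>
    obtain ⟨l, hl⟩ := ih
    exact ⟨l.reverse, by rw [P.prodW_reverse, hl]⟩

/-- The fundamental domain property of the closed chamber. -/
lemma fund_dom {x : V} (hx : ∀ k, 0 ≤ ⟪P.s k, x⟫) :
    ∀ {y : V}, (∀ k, 0 ≤ ⟪P.s k, y⟫) → ∀ {w : V ≃ₗᵢ[ℝ] V}, w ∈ P.W → w y = x → x = y := by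
  suffices h : ∀ (N : ℕ) (l : List (Fin n)), l.length ≤ N → ∀ y : V,
      (∀ k, 0 ≤ ⟪P.s k, y⟫) → P.prodW l y = x → x = y by
    intro y hy w hw hwy
    obtain ⟨l, hl⟩ := P.mem_W_word hw
    exact h l.length l le_rfl y hy (by rw [hl]; exact hwy)
  intro N
  induction N with
  | zero =>
    intro l hl y hy hxy
    rw [List.length_eq_zero_iff.1 (Nat.le_zero.1 hl)] at hxy
    rw [P.prodW_nil] at hxy
    exact hxy.symm
  | succ N ih =>
    intro l hl y hy hxy
    rcases List.eq_nil_or_concat l with rfl | ⟨u, j, rfl⟩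
    · rw [P.prodW_nil] at hxy
      exact hxy.symm
    · rw [List.concat_eq_append] at hxy hl
      have hlen : u.length + 1 = (u ++ [j]).length := by simp
      have hγR : P.prodW u (P.s j) ∈ P.R := P.W_maps (P.prodW_mem_W u) _ (P.hsR j)
      have happ : ∀ v : V, P.prodW (u ++ [j]) v = P.prodW u (P.sg (P.s j) v) := by
        intro v
        rw [P.prodW_append, P.prodW_singleton]
        rfl
      rcases P.pos_or hγR with hp | hp
      · -- γ := prodW u (s j) positive, w (s j) = -γ: wall value vanishes
        have hsj0 := P.root_ne_zero (P.hsR j)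
        have hval : ⟪P.s j, y⟫ = 0 := by
          have h1 : ⟪P.s j, y⟫ = ⟪P.prodW (u ++ [j]) (P.s j), x⟫ := by
            rw [← hxy, (P.prodW (u ++ [j])).inner_map_map]
          have h2 : P.prodW (u ++ [j]) (P.s j) = -(P.prodW u (P.s j)) := by
            rw [happ, P.sg_self hsj0, map_neg]
          have h3 : 0 ≤ ⟪P.prodW u (P.s j), x⟫ := P.pos_inner_nonneg hp hx
          have h4 := hy j
          rw [h2, inner_neg_left] at h1
          linarith
        have hfix : P.sg (P.s j) y = y := by
          rw [P.sg_apply, rootReflection_of_inner_zero _ _ hval]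
        apply ih u (by omega) y hy
        rw [← hxy, happ, hfix]
      · -- deletion case
        obtain ⟨u', hu'len, hu'eq⟩ := P.deletion u j hp
        have hueq : P.prodW u' = P.prodW (u ++ [j]) := by
          rw [hu'eq, P.prodW_append, P.prodW_singleton]
        apply ih u' (by omega) y hy
        rw [hueq]
        exact hxy

/-- The orbit of the `i`-th simple root. -/
def orbit (i : Fin n) : Set V := {x : V | ∃ w ∈ P.W, x = w (P.s i)}

lemma orbit_sub_R {i : Fin n} {β : V} (hβ : β ∈ P.orbit i) : β ∈ P.R := by
  obtain ⟨w, hw, rfl⟩ := hβ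
  exact P.W_maps hw _ (P.hsR i)

lemma orbit_apply {i : Fin n} {β : V} (hβ : β ∈ P.orbit i) {w : V ≃ₗᵢ[ℝ] V}
    (hw : w ∈ P.W) : w β ∈ P.orbit i := by
  obtain ⟨u, hu, rfl⟩ := hβ
  exact ⟨w * u, mul_mem hw hu, rfl⟩

lemma orbit_neg {i : Fin n} {β : V} (hβ : β ∈ P.orbit i) : -β ∈ P.orbit i := by
  have hβR : β ∈ P.R := P.orbit_sub_R hβ
  have := P.orbit_apply hβ (P.sg_mem_W hβR)
  rwa [P.sg_self (P.root_ne_zero hβR)] at this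

lemma coeff_ge_one {i : Fin n} (halone : ∀ j, P.s j ∈ P.orbit i → j = i) :
    ∀ {β : V}, β ∈ P.orbit i → P.pos β → 1 ≤ P.s.repr β i := by
  classical
  obtain ⟨δ, hδ⟩ := P.exists_inner_eq (fun _ => 1)
  suffices h : ∀ (N : ℕ) (β : V), β ∈ P.orbit i → P.pos β →
      (P.R.filter (fun γ => ⟪γ, δ⟫ < ⟪β, δ⟫)).card ≤ N → 1 ≤ P.s.repr β i by
    intro β hβo hβp
    exact h _ β hβo hβp le_rfl
  have main : ∀ (N : ℕ),
      (∀ (M : ℕ), M < N → ∀ (β : V), β ∈ P.orbit i → P.pos β →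
        (P.R.filter (fun γ => ⟪γ, δ⟫ < ⟪β, δ⟫)).card ≤ M → 1 ≤ P.s.repr β i) →
      ∀ (β : V), β ∈ P.orbit i → P.pos β →
      (P.R.filter (fun γ => ⟪γ, δ⟫ < ⟪β, δ⟫)).card ≤ N → 1 ≤ P.s.repr β i := by
    intro N ih β hβo hβp hcard
    by_cases hsimp : ∃ k, β = P.s k
    · obtain ⟨k, rfl⟩ := hsimp
      have := halone k hβo
      subst this
      rw [P.s.repr_self]
      simp
    · push_neg at hsimp
      obtain ⟨j, c, hc, hform, hβ'⟩ := P.key_step hβp hsimp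
      have hm := P.measure_lt hδ hβp hc hform hβ'
      have hβ'o : P.sg (P.s j) β ∈ P.orbit i := P.orbit_apply hβo (P.sg_mem_W (P.hsR j))
      have hN : 0 < N := by omega
      have hih := ih (N - 1) (by omega) _ hβ'o hβ' (by omega)
      have hreprform : P.s.repr (P.sg (P.s j) β) i =
          P.s.repr β i - c * (if j = i then 1 else 0) := by
        rw [hform, map_sub, map_smul]
        simp [P.s.repr_self, Finsupp.single_apply]
      rw [hreprform] at hih
      by_cases hji : j = i
      · rw [if_pos hji] at hih
        nlinarith
      · rw [if_neg hji] at hih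
        linarith
  intro N
  induction N using Nat.strong_induction_on with
  | _ N ih => exact main N ih

end RSys

/-- Let `R` be a reduced root system in `V` whose simple system
`s : Fin n → V` is a basis of `V`, with reflection group `W` (the subgroup of the
isometry group of `V` generated by the reflections `σ_α`, `α ∈ R`), positive system
`R₊`, closed Weyl chamber `C̄ = {x | ∀ j, ⟪s j, x⟫ ≥ 0}` and orbit
`Rⁱ = {w (s i) | w ∈ W}` of a simple root `s i`.  Then `s i` is the only simple root
lying in `Rⁱ` if and only if for every `ε > 0`,
`⋃_{w ∈ W} {x ∈ w C̄ : 0 ≤ ⟪w (s i), x⟫ ≤ ε} = ⋃_{α ∈ Rⁱ ∩ R₊} {x : |⟪α, x⟫| ≤ ε}`. -/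
theorem simple_root_alone_in_orbit_iff {V : Type*} [NormedAddCommGroup V]
    [InnerProductSpace ℝ V] {n : ℕ}
    (R : Finset V) (hR0 : (0 : V) ∉ R)
    (hRrefl : ∀ α ∈ R, rootReflection α '' (R : Set V) = (R : Set V))
    (hRred : ∀ α ∈ R, {x : V | ∃ c : ℝ, x = c • α} ∩ (R : Set V) = {α, -α})
    (s : Module.Basis (Fin n) ℝ V) (hsR : ∀ j, s j ∈ R)
    (hsimple : ∀ α ∈ R, (∀ j, 0 ≤ s.repr α j) ∨ (∀ j, s.repr α j ≤ 0))
    (W : Subgroup (V ≃ₗᵢ[ℝ] V))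
    (hW : W = Subgroup.closure {g : V ≃ₗᵢ[ℝ] V | ∃ α ∈ R, ∀ v, g v = rootReflection α v})
    (C : Set V) (hC : C = {x : V | ∀ j, 0 ≤ ⟪s j, x⟫})
    (Rplus : Set V) (hRplus : Rplus = {α : V | α ∈ R ∧ ∀ j, 0 ≤ s.repr α j})
    (i : Fin n)
    (Ri : Set V) (hRi : Ri = {x : V | ∃ w ∈ W, x = w (s i)}) :
    (∀ j : Fin n, s j ∈ Ri → j = i) ↔
      ∀ ε : ℝ, 0 < ε →
        (⋃ w ∈ W, {x : V | x ∈ (w : V ≃ₗᵢ[ℝ] V) '' C ∧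
            0 ≤ ⟪(w : V ≃ₗᵢ[ℝ] V) (s i), x⟫ ∧ ⟪(w : V ≃ₗᵢ[ℝ] V) (s i), x⟫ ≤ ε}) =
        ⋃ α ∈ Ri ∩ Rplus, {x : V | |⟪α, x⟫| ≤ ε} := by
  subst hW hC hRplus hRi
  set P : RSys V n := ⟨R, hR0, hRrefl, hRred, s, hsR, hsimple⟩ with hP
  have horbit : {x : V | ∃ w ∈ Subgroup.closure
      {g : V ≃ₗᵢ[ℝ] V | ∃ α ∈ R, ∀ v, g v = rootReflection α v}, x = w (s i)} = P.orbit i := rfl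
  constructor
  · -- alone → the set equality
    intro halone ε hε
    have halone' : ∀ j, P.s j ∈ P.orbit i → j = i := halone
    apply Set.Subset.antisymm
    · -- LHS ⊆ RHS
      intro x hx
      simp only [Set.mem_iUnion, Set.mem_setOf_eq, exists_prop] at hx ⊢
      obtain ⟨w, hw, _, h0, hε'⟩ := hx
      have hαR : w (s i) ∈ P.R := P.W_maps hw _ (P.hsR i)
      have hαo : w (s i) ∈ P.orbit i := ⟨w, hw, rfl⟩
      rcases P.pos_or hαR with hp | hp
      · exact ⟨w (s i), ⟨hαo, hp⟩, by rw [abs_of_nonneg h0]; exact hε'⟩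
      · refine ⟨-(w (s i)), ⟨P.orbit_neg hαo, hp⟩, ?_⟩
        rw [inner_neg_left, abs_neg, abs_of_nonneg h0]
        exact hε'
    · -- RHS ⊆ LHS
      intro x hx
      simp only [Set.mem_iUnion, Set.mem_setOf_eq, exists_prop] at hx ⊢
      obtain ⟨α, ⟨hαo, hαp⟩, hxα⟩ := hx
      obtain ⟨w, hwW, hyC⟩ := P.covering x
      have hsymmW : w.symm ∈ P.W := P.W_symm_mem hwW
      have hγo : w.symm α ∈ P.orbit i := P.orbit_apply hαo hsymmW
      have hγy : ⟪w.symm α, w.symm x⟫ = ⟪α, x⟫ := w.symm.inner_map_map α x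
      have hγR := P.orbit_sub_R hγo
      -- choose the positive one among ±(w.symm α)
      have hβ : ∃ β : V, β ∈ P.orbit i ∧ P.pos β ∧ ⟪β, w.symm x⟫ ≤ ε := by
        rcases P.pos_or hγR with hp | hp
        · refine ⟨w.symm α, hγo, hp, ?_⟩
          rw [hγy]
          exact le_trans (le_abs_self _) hxα
        · refine ⟨-(w.symm α), P.orbit_neg hγo, hp, ?_⟩
          rw [inner_neg_left, hγy]
          exact le_trans (neg_le_abs _) hxα
      obtain ⟨β, hβo, hβp, hβval⟩ := hβ
      have hco : 1 ≤ P.s.repr β i := P.coeff_ge_one halone' hβo hβp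
      have hsi : ⟪s i, w.symm x⟫ ≤ ⟪β, w.symm x⟫ := by
        rw [P.inner_eq_sum β]
        calc ⟪s i, w.symm x⟫ ≤ P.s.repr β i * ⟪P.s i, w.symm x⟫ :=
              le_mul_of_one_le_left (hyC i) hco
          _ ≤ ∑ k, P.s.repr β k * ⟪P.s k, w.symm x⟫ :=
              Finset.single_le_sum (fun k _ => mul_nonneg (hβp.2 k) (hyC k))
                (Finset.mem_univ i)
      have hwx : ⟪w (s i), x⟫ = ⟪s i, w.symm x⟫ := by
        conv_lhs => rw [← w.apply_symm_apply x]
        exact w.inner_map_map _ _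
      refine ⟨w, hwW, ⟨w.symm x, hyC, w.apply_symm_apply x⟩, ?_, ?_⟩
      · rw [hwx]; exact hyC i
      · rw [hwx]; exact le_trans hsi hβval
  · -- set equality → alone
    intro heq j hj
    by_contra hji
    obtain ⟨x, hxval⟩ := P.exists_inner_eq (fun k => if k = j then 0 else 1)
    have hxC : ∀ k, 0 ≤ ⟪s k, x⟫ := by
      intro k
      rw [hxval]
      split <;> norm_num
    have h2 := heq (1/2) (by norm_num)
    have hsjpos : P.pos (s j) := by
      refine ⟨hsR j, fun k => ?_⟩
      have : P.s.repr (P.s j) = Finsupp.single j 1 := P.s.repr_self j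
      rw [this, Finsupp.single_apply]
      split <;> norm_num
    have hxRHS : x ∈ ⋃ α ∈ ({x : V | ∃ w ∈ Subgroup.closure
        {g : V ≃ₗᵢ[ℝ] V | ∃ α ∈ R, ∀ v, g v = rootReflection α v}, x = w (s i)} ∩
        {α : V | α ∈ R ∧ ∀ j, 0 ≤ s.repr α j}), {y : V | |⟪α, y⟫| ≤ (1/2 : ℝ)} := by
      simp only [Set.mem_iUnion, Set.mem_setOf_eq, exists_prop]
      refine ⟨s j, ⟨hj, hsjpos⟩, ?_⟩
      rw [hxval j, if_pos rfl]
      norm_num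
    rw [← h2] at hxRHS
    simp only [Set.mem_iUnion, Set.mem_setOf_eq, exists_prop] at hxRHS
    obtain ⟨w, hw, ⟨y, hyC, hyx⟩, h0, hhalf⟩ := hxRHS
    have hxy : x = y := P.fund_dom hxC hyC hw hyx
    have hfin : ⟪w (s i), x⟫ = ⟪s i, x⟫ := by
      conv_lhs => rw [← hyx]
      rw [w.inner_map_map, ← hxy]
    rw [hfin, hxval i, if_neg (fun h : i = j => hji h.symm)] at hhalf
    norm_num at hhalf
end

section
/- Let s_i be a simple root of a reduced root system R whose simple system S is a basis of V, with reflection group W and closed Weyl chamber C̄. Then for every ε > 0 the following set equality holds: ⋃_{w ∈ W} {x ∈ w C̄ : 0 ≤ ⟨w s_i, x⟩ ≤ ε} = ⋃_{w ∈ W} {x ∈ w(C̄ ∪ σ_{s_i}(C̄)) : −ε ≤ ⟨w s_i, x⟩ ≤ ε}. -/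
open scoped RealInnerProductSpace

theorem rootReflection_involutive {V : Type*} [NormedAddCommGroup V]
    [InnerProductSpace ℝ V] {α : V} (hα : ⟪α, α⟫ ≠ 0) :
    Function.Involutive (rootReflection α) := by
  intro v
  simp only [rootReflection, inner_sub_right, real_inner_smul_right]
  rw [sub_sub, ← add_smul]
  have : 2 * ⟪α, v⟫ / ⟪α, α⟫ + 2 * (⟪α, v⟫ - 2 * ⟪α, v⟫ / ⟪α, α⟫ * ⟪α, α⟫) / ⟪α, α⟫ = 0 := by
    field_simp
    ring
  rw [this, zero_smul, sub_zero]

noncomputable def rootReflectionLM {V : Type*} [NormedAddCommGroup V]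
    [InnerProductSpace ℝ V] (α : V) : V →ₗ[ℝ] V where
  toFun := rootReflection α
  map_add' u v := by
    simp only [rootReflection, inner_add_right, mul_add, add_div, add_smul]
    abel
  map_smul' r v := by
    simp only [rootReflection, real_inner_smul_right, RingHom.id_apply, smul_sub, smul_smul]
    congr 1
    ring_nf

noncomputable def rootReflectionEquiv {V : Type*} [NormedAddCommGroup V]
    [InnerProductSpace ℝ V] (α : V) (hα : ⟪α, α⟫ ≠ 0) : V ≃ₗᵢ[ℝ] V :=
  (LinearEquiv.ofInvolutive (rootReflectionLM α) (rootReflection_involutive hα)).isometryOfInner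
    (by
      intro x y
      show ⟪rootReflection α x, rootReflection α y⟫ = ⟪x, y⟫
      simp only [rootReflection, inner_sub_left, inner_sub_right, real_inner_smul_left,
        real_inner_smul_right]
      rw [real_inner_comm x α]
      field_simp
      ring)

@[simp] theorem rootReflectionEquiv_apply {V : Type*} [NormedAddCommGroup V]
    [InnerProductSpace ℝ V] (α : V) (hα : ⟪α, α⟫ ≠ 0) (v : V) :
    rootReflectionEquiv α hα v = rootReflection α v := rfl

theorem rootReflection_self {V : Type*} [NormedAddCommGroup V]
    [InnerProductSpace ℝ V] {α : V} (hα : ⟪α, α⟫ ≠ 0) :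
    rootReflection α α = -α := by
  simp only [rootReflection, mul_div_assoc, div_self hα, mul_one]
  rw [two_smul]; abel

/-- Let `R` be a reduced root system in `V` whose simple system
`s : Fin n → V` is a basis of `V`, with reflection group `W` and closed Weyl chamber
`C̄`.  Then for every simple root `s i` and every `ε > 0`,
`⋃_{w ∈ W} {x ∈ w C̄ : 0 ≤ ⟪w (s i), x⟫ ≤ ε}
  = ⋃_{w ∈ W} {x ∈ w (C̄ ∪ σ_{s i} C̄) : -ε ≤ ⟪w (s i), x⟫ ≤ ε}`. -/
theorem union_chambers_eq_union_doubled_chambers {V : Type*} [NormedAddCommGroup V]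
    [InnerProductSpace ℝ V] {n : ℕ}
    (R : Finset V) (hR0 : (0 : V) ∉ R)
    (hRrefl : ∀ α ∈ R, rootReflection α '' (R : Set V) = (R : Set V))
    (hRred : ∀ α ∈ R, {x : V | ∃ c : ℝ, x = c • α} ∩ (R : Set V) = {α, -α})
    (s : Module.Basis (Fin n) ℝ V) (hsR : ∀ j, s j ∈ R)
    (hsimple : ∀ α ∈ R, (∀ j, 0 ≤ s.repr α j) ∨ (∀ j, s.repr α j ≤ 0))
    (W : Subgroup (V ≃ₗᵢ[ℝ] V))
    (hW : W = Subgroup.closure {g : V ≃ₗᵢ[ℝ] V | ∃ α ∈ R, ∀ v, g v = rootReflection α v})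
    (C : Set V) (hC : C = {x : V | ∀ j, 0 ≤ ⟪s j, x⟫})
    (i : Fin n) :
    ∀ ε : ℝ, 0 < ε →
      (⋃ w ∈ W, {x : V | x ∈ (w : V ≃ₗᵢ[ℝ] V) '' C ∧
          0 ≤ ⟪(w : V ≃ₗᵢ[ℝ] V) (s i), x⟫ ∧ ⟪(w : V ≃ₗᵢ[ℝ] V) (s i), x⟫ ≤ ε}) =
      ⋃ w ∈ W, {x : V | x ∈ (w : V ≃ₗᵢ[ℝ] V) '' (C ∪ rootReflection (s i) '' C) ∧
          -ε ≤ ⟪(w : V ≃ₗᵢ[ℝ] V) (s i), x⟫ ∧ ⟪(w : V ≃ₗᵢ[ℝ] V) (s i), x⟫ ≤ ε} := by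
  intro ε hε
  set α := s i with hαdef
  have hα0 : α ≠ 0 := fun h => hR0 (h ▸ hsR i)
  have hαα : ⟪α, α⟫ ≠ 0 := fun h => hα0 (inner_self_eq_zero.mp h)
  set σ : V ≃ₗᵢ[ℝ] V := rootReflectionEquiv α hαα with hσdef
  have hσW : σ ∈ W := by
    rw [hW]
    exact Subgroup.subset_closure ⟨α, hsR i, fun v => rfl⟩
  have hσα : σ α = -α := rootReflection_self hαα
  ext x
  simp only [Set.mem_iUnion, Set.mem_setOf_eq]
  constructor
  · rintro ⟨w, hw, hxC, h0, h1⟩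
    exact ⟨w, hw, by
      obtain ⟨y, hy, rfl⟩ := hxC
      exact ⟨y, Or.inl hy, rfl⟩, le_trans (by linarith) h0, h1⟩
  · rintro ⟨w, hw, ⟨y, hy, rfl⟩, h0, h1⟩
    rcases hy with hy | ⟨z, hz, rfl⟩
    · refine ⟨w, hw, ⟨y, hy, rfl⟩, ?_, h1⟩
      rw [LinearIsometryEquiv.inner_map_map]
      rw [hC] at hy
      exact hy i
    · refine ⟨w * σ, mul_mem hw hσW, ⟨z, hz, rfl⟩, ?_, ?_⟩
      · show (0:ℝ) ≤ ⟪w (σ α), w (σ z)⟫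
        rw [LinearIsometryEquiv.inner_map_map w, LinearIsometryEquiv.inner_map_map σ]
        rw [hC] at hz
        exact hz i
      · show ⟪w (σ α), w (rootReflection α z)⟫ ≤ ε
        rw [hσα, map_neg, inner_neg_left]
        linarith
end

section
/- Let (s_1, …, s_n) be a basis of an n-dimensional real inner product space V satisfying ⟨s_i, s_j⟩ ≤ 0 for all i ≠ j, and let (ξ_1, …, ξ_n) be its dual basis, characterized by ⟨ξ_i, s_j⟩ = δ_{ij}. Then ⟨ξ_i, ξ_j⟩ ≥ 0 for all i ≠ j. -/
open scoped RealInnerProductSpace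

/-- If `(s 1, …, s n)` is a basis of an `n`-dimensional real inner
product space `V` with `⟪s i, s j⟫ ≤ 0` for `i ≠ j`, and `(ξ 1, …, ξ n)` is its dual
basis (characterized by `⟪ξ i, s j⟫ = δ i j`), then `⟪ξ i, ξ j⟫ ≥ 0` for all `i ≠ j`. -/
theorem dual_basis_inner_nonneg {V : Type*} [NormedAddCommGroup V]
    [InnerProductSpace ℝ V] {n : ℕ}
    (s : Module.Basis (Fin n) ℝ V)
    (hs : ∀ i j, i ≠ j → ⟪s i, s j⟫ ≤ 0)
    (ξ : Fin n → V)
    (hξ : ∀ i j, ⟪ξ i, s j⟫ = if i = j then (1 : ℝ) else 0) :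
    ∀ i j, i ≠ j → 0 ≤ ⟪ξ i, ξ j⟫ := by
  intro i j hij
  set c : Fin n → ℝ := fun k => s.repr (ξ j) k with hc
  have hrep : ξ j = ∑ k, c k • s k := (s.sum_repr (ξ j)).symm
  have key : ∀ l, ⟪ξ l, ξ j⟫ = c l := by
    intro l
    conv_lhs => rw [hrep]
    rw [inner_sum]
    simp only [real_inner_smul_right, hξ, mul_ite, mul_one, mul_zero]
    simp
  have hcnn : ∀ k, 0 ≤ c k := by
    by_contra h
    push_neg at h
    obtain ⟨k0, hk0⟩ := h
    set N : Finset (Fin n) := Finset.univ.filter (fun k => c k < 0) with hN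
    set y : V := ∑ k ∈ N, (-c k) • s k with hy
    have hjN : j ∉ N := by
      have hcj : 0 ≤ c j := (key j) ▸ real_inner_self_nonneg
      simp [hN, not_lt.2 hcj]
    have hxy : ⟪ξ j, y⟫ = 0 := by
      rw [hy, inner_sum]
      apply Finset.sum_eq_zero
      intro l hl
      have hjl : j ≠ l := fun hll => hjN (hll ▸ hl)
      rw [real_inner_smul_right, hξ]
      simp [hjl]
    have hsum : ξ j + y = ∑ k ∈ Nᶜ, c k • s k := by
      rw [hrep, hy, ← Finset.sum_compl_add_sum N (fun k => c k • s k)]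
      simp only [neg_smul, Finset.sum_neg_distrib]
      abel
    have hyy : ⟪y, y⟫ ≤ 0 := by
      have h1 : ⟪y, y⟫ = ⟪ξ j + y, y⟫ := by
        rw [inner_add_left, hxy, zero_add]
      rw [h1, hsum, sum_inner]
      apply Finset.sum_nonpos
      intro k hk
      rw [real_inner_smul_left, hy, inner_sum]
      apply mul_nonpos_of_nonneg_of_nonpos
      · have : ¬ c k < 0 := by
          intro hck
          exact (Finset.mem_compl.mp hk) (by simp [hN, hck])
        linarith
      · apply Finset.sum_nonpos
        intro l hl
        rw [real_inner_smul_right]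
        have hkl : k ≠ l := fun hkl => (Finset.mem_compl.mp hk) (hkl ▸ hl)
        have hcl : c l < 0 := by
          have := hl; simp [hN] at this; exact this
        have := hs k l hkl
        nlinarith
    have hy0 : y = 0 := by
      have := real_inner_self_nonpos.mp hyy
      exact this
    have hk0N : k0 ∈ N := by simp [hN, hk0]
    have := linearIndependent_iff'.mp s.linearIndependent N (fun l => -c l)
      (by rw [← hy]; exact hy0) k0 hk0N
    simp at this
    linarith
  rw [key i]
  exact hcnn i
end

section
/- Let (s_1, …, s_n) be a basis of an n-dimensional real inner product space V satisfying ⟨s_i, s_j⟩ ≤ 0 for all i ≠ j, and let (ξ_1, …, ξ_n) be its dual basis, characterized by ⟨ξ_i, s_j⟩ = δ_{ij}. Then for each i one has the expansion ξ_i = Σ_{j=1}^n ⟨ξ_i, ξ_j⟩ s_j, and all the coefficients ⟨ξ_i, ξ_j⟩ in this expansion are nonnegative; in particular every dual basis vector ξ_i lies in the closed convex cone generated by {s_1, …, s_n}. -/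
open scoped RealInnerProductSpace

/-- If `(s 1, …, s n)` is a basis of an `n`-dimensional real inner
product space `V` with `⟪s i, s j⟫ ≤ 0` for `i ≠ j`, and `(ξ 1, …, ξ n)` is its dual
basis (characterized by `⟪ξ i, s j⟫ = δ i j`), then each `ξ i` expands as
`ξ i = ∑ j, ⟪ξ i, ξ j⟫ • s j` with all coefficients `⟪ξ i, ξ j⟫` nonnegative; in
particular each `ξ i` lies in the closed convex cone generated by the `s j`, i.e. it is
a linear combination of the `s j` with nonnegative coefficients. -/
theorem dual_basis_mem_cone {V : Type*} [NormedAddCommGroup V]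
    [InnerProductSpace ℝ V] {n : ℕ}
    (s : Module.Basis (Fin n) ℝ V)
    (hs : ∀ i j, i ≠ j → ⟪s i, s j⟫ ≤ 0)
    (ξ : Fin n → V)
    (hξ : ∀ i j, ⟪ξ i, s j⟫ = if i = j then (1 : ℝ) else 0) :
    (∀ i, ξ i = ∑ j, ⟪ξ i, ξ j⟫ • s j) ∧
    (∀ i j, 0 ≤ ⟪ξ i, ξ j⟫) ∧
    (∀ i, ∃ c : Fin n → ℝ, (∀ j, 0 ≤ c j) ∧ ξ i = ∑ j, c j • s j) := by
  -- `⟪ξ j, v⟫` recovers the `j`-th coordinate of `v` in the basis `s`.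
  have key : ∀ (j : Fin n) (v : V), ⟪ξ j, v⟫ = s.repr v j := by
    intro j v
    conv_lhs => rw [← s.sum_repr v]
    rw [inner_sum]
    simp only [real_inner_smul_right, hξ, mul_ite, mul_one, mul_zero]
    simp
  have hsymm : ∀ i j, ⟪ξ i, ξ j⟫ = s.repr (ξ i) j := by
    intro i j
    rw [real_inner_comm, key]
  -- nonnegativity of the coefficients
  have hnonneg : ∀ i j, 0 ≤ s.repr (ξ i) j := by
    intro i
    set c : Fin n → ℝ := fun j => s.repr (ξ i) j with hc
    show ∀ j, 0 ≤ c j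
    by_contra hcon
    push_neg at hcon
    set N : Finset (Fin n) := Finset.univ.filter (fun j => c j < 0) with hN
    have hNmem : ∀ j, j ∈ N ↔ c j < 0 := by intro j; simp [hN]
    have hNne : N.Nonempty := by
      obtain ⟨j, hj⟩ := hcon
      exact ⟨j, (hNmem j).2 hj⟩
    set xm : V := ∑ j ∈ N, (-c j) • s j with hxm
    set xp : V := ∑ j ∈ Nᶜ, c j • s j with hxp
    have hsplit : xp - xm = ξ i := by
      rw [hxp, hxm]
      simp only [neg_smul, Finset.sum_neg_distrib, sub_neg_eq_add]
      rw [Finset.sum_compl_add_sum]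
      exact s.sum_repr (ξ i)
    -- `i ∉ N` since `c i = ‖ξ i‖² ≥ 0`
    have hiN : i ∉ N := by
      rw [hNmem]
      push_neg
      have : c i = ⟪ξ i, ξ i⟫ := (hsymm i i).symm
      rw [this]
      exact real_inner_self_nonneg
    -- `⟪ξ i, xm⟫ = 0`
    have h1 : ⟪ξ i, xm⟫ = 0 := by
      rw [hxm, inner_sum]
      refine Finset.sum_eq_zero fun j hj => ?_
      rw [real_inner_smul_right, hξ, if_neg, mul_zero]
      rintro rfl
      exact hiN hj
    -- `⟪xp, xm⟫ ≤ 0`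
    have h2 : ⟪xp, xm⟫ ≤ 0 := by
      rw [hxp, hxm, sum_inner]
      refine Finset.sum_nonpos fun j hj => ?_
      rw [real_inner_smul_left, inner_sum]
      refine mul_nonpos_of_nonneg_of_nonpos ?_ ?_
      · rw [Finset.mem_compl, hNmem] at hj
        linarith
      · refine Finset.sum_nonpos fun k hk => ?_
        rw [real_inner_smul_right]
        have hjk : j ≠ k := by
          rintro rfl
          rw [Finset.mem_compl] at hj
          exact hj hk
        have hck : c k < 0 := (hNmem k).1 hk
        have := hs j k hjk
        nlinarith
    -- hence `xm = 0`
    have hxm0 : xm = 0 := by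
      have : ⟪xm, xm⟫ ≤ 0 := by
        have : xm = xp - ξ i := by rw [← hsplit]; abel
        calc ⟪xm, xm⟫ = ⟪xp, xm⟫ - ⟪ξ i, xm⟫ := by
              rw [← inner_sub_left, ← this]
          _ ≤ 0 := by rw [h1]; linarith
      have h0 := real_inner_self_nonneg (x := xm)
      exact inner_self_eq_zero.1 (le_antisymm this h0)
    -- contradiction: pairing with `ξ j` for `j ∈ N`
    obtain ⟨j, hj⟩ := hNne
    have hcj : c j < 0 := (hNmem j).1 hj
    have : ⟪ξ j, xm⟫ = -c j := by
      rw [hxm, inner_sum]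
      rw [Finset.sum_eq_single j]
      · rw [real_inner_smul_right, hξ, if_pos rfl, mul_one]
      · intro k hk hkj
        rw [real_inner_smul_right, hξ, if_neg (fun h => hkj h.symm), mul_zero]
      · intro h; exact absurd hj h
    rw [hxm0, inner_zero_right] at this
    linarith
  refine ⟨fun i => ?_, fun i j => ?_, fun i => ?_⟩
  · conv_lhs => rw [← s.sum_repr (ξ i)]
    refine Finset.sum_congr rfl fun j _ => ?_
    rw [hsymm]
  · rw [hsymm]; exact hnonneg i j
  · refine ⟨fun j => ⟪ξ i, ξ j⟫, fun j => by simp only [hsymm]; exact hnonneg i j, ?_⟩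
    conv_lhs => rw [← s.sum_repr (ξ i)]
    refine Finset.sum_congr rfl fun j _ => ?_
    simp only [hsymm]
end

section
/- Let R be a reduced root system in V whose simple system S = {s_1, …, s_n} is a basis of V, with reflection group W, positive system R_+ and closed Weyl chamber C̄. Suppose the simple root s_i is the only element of S lying in its orbit R^i = {w s_i : w ∈ W}. Then for every ε > 0, ⋃_{w ∈ W} {x ∈ w C̄ : 0 ≤ ⟨w s_i, x⟩ ≤ ε} = ⋃_{α ∈ R^i} {x ∈ V : 0 ≤ ⟨α, x⟩ ≤ ε}. -/
open scoped RealInnerProductSpace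

noncomputable def sigmaLI {V : Type*} [NormedAddCommGroup V]
    [InnerProductSpace ℝ V] [FiniteDimensional ℝ V] (α : V) : V ≃ₗᵢ[ℝ] V :=
  Submodule.reflection (Submodule.span ℝ {α})ᗮ

lemma sigmaLI_apply {V : Type*} [NormedAddCommGroup V]
    [InnerProductSpace ℝ V] [FiniteDimensional ℝ V] (α v : V) :
    sigmaLI α v = rootReflection α v := by
  rw [sigmaLI, Submodule.reflection_orthogonal_apply, Submodule.reflection_singleton_apply, rootReflection,
    real_inner_self_eq_norm_sq]
  rw [neg_sub, two_smul]
  rw [show (2 * ⟪α, v⟫ / ‖α‖ ^ 2) • α = (⟪α, v⟫ / ‖α‖ ^ 2) • α + (⟪α, v⟫ / ‖α‖ ^ 2) • α by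
    rw [← add_smul]; ring_nf]
  abel
lemma inner_self_pos'' {V : Type*} [NormedAddCommGroup V] [InnerProductSpace ℝ V]
    {x : V} (hx : x ≠ 0) : 0 < ⟪x, x⟫ := by
  rw [real_inner_self_eq_norm_sq]
  exact pow_pos (norm_pos_iff.mpr hx) 2

/-- Let `R` be a reduced root system in `V` whose simple system
`s : Fin n → V` is a basis of `V`, with reflection group `W`, closed Weyl chamber
`C̄` and orbit `Rⁱ = {w (s i) | w ∈ W}` of a simple root `s i`.  If `s i` is the only
simple root lying in `Rⁱ`, then for every `ε > 0`,
`⋃_{w ∈ W} {x ∈ w C̄ : 0 ≤ ⟪w (s i), x⟫ ≤ ε} = ⋃_{α ∈ Rⁱ} {x : 0 ≤ ⟪α, x⟫ ≤ ε}`. -/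
theorem union_chambers_eq_union_orbit {V : Type*} [NormedAddCommGroup V]
    [InnerProductSpace ℝ V] {n : ℕ}
    (R : Finset V) (hR0 : (0 : V) ∉ R)
    (hRrefl : ∀ α ∈ R, rootReflection α '' (R : Set V) = (R : Set V))
    (hRred : ∀ α ∈ R, {x : V | ∃ c : ℝ, x = c • α} ∩ (R : Set V) = {α, -α})
    (s : Module.Basis (Fin n) ℝ V) (hsR : ∀ j, s j ∈ R)
    (hsimple : ∀ α ∈ R, (∀ j, 0 ≤ s.repr α j) ∨ (∀ j, s.repr α j ≤ 0))
    (W : Subgroup (V ≃ₗᵢ[ℝ] V))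
    (hW : W = Subgroup.closure {g : V ≃ₗᵢ[ℝ] V | ∃ α ∈ R, ∀ v, g v = rootReflection α v})
    (C : Set V) (hC : C = {x : V | ∀ j, 0 ≤ ⟪s j, x⟫})
    (i : Fin n)
    (Ri : Set V) (hRi : Ri = {x : V | ∃ w ∈ W, x = w (s i)})
    (honly : ∀ j : Fin n, s j ∈ Ri → j = i) :
    ∀ ε : ℝ, 0 < ε →
      (⋃ w ∈ W, {x : V | x ∈ (w : V ≃ₗᵢ[ℝ] V) '' C ∧
          0 ≤ ⟪(w : V ≃ₗᵢ[ℝ] V) (s i), x⟫ ∧ ⟪(w : V ≃ₗᵢ[ℝ] V) (s i), x⟫ ≤ ε}) =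
      ⋃ α ∈ Ri, {x : V | 0 ≤ ⟪α, x⟫ ∧ ⟪α, x⟫ ≤ ε} := by
  haveI : FiniteDimensional ℝ V := s.finiteDimensional_of_finite
  intro ε hε
  have hRne : ∀ γ ∈ R, γ ≠ 0 := fun γ hγ h => hR0 (h ▸ hγ)
  -- simple reflections belong to W
  have hσW : ∀ α ∈ R, sigmaLI α ∈ W := by
    intro α hα
    rw [hW]
    exact Subgroup.subset_closure ⟨α, hα, fun v => sigmaLI_apply α v⟩
  -- W preserves R
  have hWR : ∀ w : V ≃ₗᵢ[ℝ] V, w ∈ W → ⇑w '' (R : Set V) = (R : Set V) := by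
    intro w hw
    rw [hW] at hw
    induction hw using Subgroup.closure_induction with
    | mem g hg =>
      obtain ⟨α, hα, hg⟩ := hg
      rw [show ⇑g = rootReflection α from funext hg]
      exact hRrefl α hα
    | one => simp
    | mul a b ha hb iha ihb =>
      have : ⇑(a * b) = ⇑a ∘ ⇑b := rfl
      rw [this, Set.image_comp, ihb, iha]
    | inv a ha iha =>
      have : ⇑a⁻¹ '' (⇑a '' (R : Set V)) = (R : Set V) := by
        rw [← Set.image_comp]
        have : ⇑a⁻¹ ∘ ⇑a = id := by
          funext v
          exact a.symm_apply_apply v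
        rw [this, Set.image_id]
      rw [iha] at this
      exact this
  have hWR' : ∀ w : V ≃ₗᵢ[ℝ] V, w ∈ W → ∀ γ ∈ R, w γ ∈ R := by
    intro w hw γ hγ
    have : w γ ∈ ⇑w '' (R : Set V) := ⟨γ, hγ, rfl⟩
    rw [hWR w hw] at this
    exact this
  -- W is finite
  haveI : Finite (↥W) := by
    have hinj : Function.Injective
        (fun w : ↥W => (fun r : {x // x ∈ R} =>
          (⟨(w : V ≃ₗᵢ[ℝ] V) r, hWR' _ w.2 _ r.2⟩ : {x // x ∈ R}))) := by
      intro w w' h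
      have h2 : ∀ γ ∈ R, (w : V ≃ₗᵢ[ℝ] V) γ = (w' : V ≃ₗᵢ[ℝ] V) γ := by
        intro γ hγ
        have := congrFun h ⟨γ, hγ⟩
        exact congrArg Subtype.val this
      have h3 : ((w : V ≃ₗᵢ[ℝ] V) : V →ₗ[ℝ] V) = ((w' : V ≃ₗᵢ[ℝ] V) : V →ₗ[ℝ] V) :=
        Module.Basis.ext s (fun j => h2 (s j) (hsR j))
      apply Subtype.ext
      apply LinearIsometryEquiv.ext
      intro v
      exact congrArg (fun f => f v) (congrArg DFunLike.coe h3)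
    exact Finite.of_injective _ hinj
  -- a point with positive inner products against all simple roots
  obtain ⟨d, hd⟩ : ∃ d : V, ∀ j, 0 < ⟪s j, d⟫ := by
    let T : V →ₗ[ℝ] (Fin n → ℝ) := LinearMap.pi (fun j => innerₛₗ ℝ (s j))
    have hTapp : ∀ x j, T x j = ⟪s j, x⟫ := fun x j => rfl
    have hinj : Function.Injective T := by
      rw [← LinearMap.ker_eq_bot]
      rw [Submodule.eq_bot_iff]
      intro x hx
      have hx0 : ∀ j, ⟪s j, x⟫ = 0 := fun j => congrFun hx j
      have : ⟪x, x⟫ = 0 := by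
        nth_rewrite 1 [← Module.Basis.sum_repr s x]
        rw [sum_inner]
        apply Finset.sum_eq_zero
        intro j _
        rw [real_inner_smul_left, hx0 j, mul_zero]
      exact inner_self_eq_zero.mp this
    have hfr : Module.finrank ℝ V = Module.finrank ℝ (Fin n → ℝ) := by
      rw [Module.finrank_eq_card_basis s, Module.finrank_fintype_fun_eq_card]
    have hsurj := (LinearMap.injective_iff_surjective_of_finrank_eq_finrank hfr).mp hinj
    obtain ⟨d, hd⟩ := hsurj (fun _ => 1)
    exact ⟨d, fun j => by rw [← hTapp d j, hd]; norm_num⟩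
  -- inner product transfer
  have key2 : ∀ (w : V ≃ₗᵢ[ℝ] V) (a x : V), ⟪w a, x⟫ = ⟪a, w.symm x⟫ := by
    intro w a x
    conv_lhs => rw [← w.apply_symm_apply x]
    exact w.inner_map_map a (w.symm x)
  -- every point lies in some chamber
  have chamber : ∀ x : V, ∃ w : V ≃ₗᵢ[ℝ] V, w ∈ W ∧ ∀ j, 0 ≤ ⟪s j, w.symm x⟫ := by
    intro x
    haveI : Nonempty (↥W) := ⟨1⟩
    obtain ⟨w₀, hw₀⟩ := Finite.exists_max (fun w : ↥W => ⟪(w : V ≃ₗᵢ[ℝ] V) d, x⟫)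
    refine ⟨w₀, w₀.2, fun j => ?_⟩
    have hmax := hw₀ ⟨(w₀ : V ≃ₗᵢ[ℝ] V) * sigmaLI (s j), mul_mem w₀.2 (hσW (s j) (hsR j))⟩
    simp only at hmax
    have e1 : ((w₀ : V ≃ₗᵢ[ℝ] V) * sigmaLI (s j)) d =
        (w₀ : V ≃ₗᵢ[ℝ] V) (sigmaLI (s j) d) := rfl
    rw [e1, key2 (w₀ : V ≃ₗᵢ[ℝ] V) (sigmaLI (s j) d) x, key2 (w₀ : V ≃ₗᵢ[ℝ] V) d x] at hmax
    set y := (w₀ : V ≃ₗᵢ[ℝ] V).symm x with hy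
    rw [sigmaLI_apply, rootReflection, inner_sub_left, real_inner_smul_left] at hmax
    have ht : 0 < 2 * ⟪s j, d⟫ / ⟪s j, s j⟫ :=
      div_pos (by linarith [hd j]) (inner_self_pos'' (hRne _ (hsR j)))
    nlinarith [hmax, ht]
  -- Ri is W-stable and contained in R
  have hRiW : ∀ β ∈ Ri, ∀ w : V ≃ₗᵢ[ℝ] V, w ∈ W → w β ∈ Ri := by
    intro β hβ w hw
    rw [hRi] at hβ ⊢
    obtain ⟨w₁, hw₁, rfl⟩ := hβ
    exact ⟨w * w₁, mul_mem hw hw₁, rfl⟩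
  have hRiR : ∀ β ∈ Ri, β ∈ R := by
    intro β hβ
    rw [hRi] at hβ
    obtain ⟨w₁, hw₁, rfl⟩ := hβ
    exact hWR' w₁ hw₁ (s i) (hsR i)
  -- the key lemma
  have key : ∀ m : ℕ, ∀ β, β ∈ R → β ∈ Ri → (∀ j, 0 ≤ s.repr β j) →
      (R.filter (fun γ => ∑ j, s.repr γ j < ∑ j, s.repr β j)).card < m →
      ∀ y : V, (∀ j, 0 ≤ ⟪s j, y⟫) → ⟪s i, y⟫ ≤ ⟪β, y⟫ := by
    intro m
    induction m with
    | zero => exact fun β _ _ _ h => absurd h (Nat.not_lt_zero _)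
    | succ m ih =>
      intro β hβR hβRi hβpos hcard y hy
      by_cases hβi : β = s i
      · rw [hβi]
      · have hββ : 0 < ⟪β, β⟫ := inner_self_pos'' (hRne β hβR)
        have hsum : ⟪β, β⟫ = ∑ j, s.repr β j * ⟪s j, β⟫ := by
          nth_rewrite 1 [← Module.Basis.sum_repr s β]
          rw [sum_inner]
          exact Finset.sum_congr rfl (fun j _ => real_inner_smul_left _ _ _)
        obtain ⟨j, hj⟩ : ∃ j, 0 < s.repr β j * ⟪s j, β⟫ := by
          by_contra h
          push_neg at h
          have : ⟪β, β⟫ ≤ 0 := hsum ▸ Finset.sum_nonpos (fun j _ => h j)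
          linarith
        have hjβ : 0 < ⟪s j, β⟫ := by nlinarith [hβpos j]
        set t : ℝ := 2 * ⟪s j, β⟫ / ⟪s j, s j⟫ with ht
        have htpos : 0 < t :=
          div_pos (by linarith) (inner_self_pos'' (hRne _ (hsR j)))
        set β' := β - t • s j with hβ'
        have hβ'refl : rootReflection (s j) β = β' := rfl
        have hβ'R : β' ∈ R := by
          have himg : β' ∈ rootReflection (s j) '' (R : Set V) := ⟨β, hβR, hβ'refl⟩
          rw [hRrefl (s j) (hsR j)] at himg
          exact himg
        have hβ'Ri : β' ∈ Ri := by
          have := hRiW β hβRi (sigmaLI (s j)) (hσW _ (hsR j))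
          rwa [sigmaLI_apply, hβ'refl] at this
        have hrepr : ∀ k, s.repr β' k = s.repr β k - (if j = k then t else 0) := by
          intro k
          rw [hβ']
          simp [Finsupp.single_apply, mul_ite]
        have hsum' : ∑ k, s.repr β' k = (∑ k, s.repr β k) - t := by
          rw [Finset.sum_congr rfl (fun k _ => hrepr k), Finset.sum_sub_distrib,
            Finset.sum_ite_eq, if_pos (Finset.mem_univ j)]
        have hβ'pos : ∀ k, 0 ≤ s.repr β' k := by
          rcases hsimple β' hβ'R with h | h
          · exact h
          · exfalso
            have hk : ∀ k, k ≠ j → s.repr β k = 0 := by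
              intro k hkj
              have h1 := h k
              rw [hrepr k, if_neg (fun e => hkj e.symm), sub_zero] at h1
              exact le_antisymm h1 (hβpos k)
            have hβj : β = (s.repr β j) • s j := by
              conv_lhs => rw [← Module.Basis.sum_repr s β]
              rw [Finset.sum_eq_single j]
              · intro k _ hkj
                rw [hk k hkj, zero_smul]
              · intro h; exact absurd (Finset.mem_univ j) h
            have hmem : β ∈ ({s j, -(s j)} : Set V) := by
              rw [← hRred (s j) (hsR j)]
              exact ⟨⟨_, hβj⟩, hβR⟩
            rcases hmem with h1 | h1
            · have : s j ∈ Ri := h1 ▸ hβRi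
              exact hβi (by rw [honly j this] at h1; exact h1)
            · have h2 := hβpos j
              rw [Set.mem_singleton_iff] at h1
              rw [h1] at h2
              simp [Module.Basis.repr_self] at h2
              linarith
        have hβ'filter : β' ∈ R.filter
            (fun γ => ∑ k, s.repr γ k < ∑ k, s.repr β k) :=
          Finset.mem_filter.mpr ⟨hβ'R, by
            show ∑ k, s.repr β' k < ∑ k, s.repr β k
            rw [hsum']; linarith⟩
        have hsubset : R.filter (fun γ => ∑ k, s.repr γ k < ∑ k, s.repr β' k) ⊆
            R.filter (fun γ => ∑ k, s.repr γ k < ∑ k, s.repr β k) := by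
          apply Finset.monotone_filter_right
          intro γ _ hγ
          rw [hsum'] at hγ
          linarith
        have hss : R.filter (fun γ => ∑ k, s.repr γ k < ∑ k, s.repr β' k) ⊂
            R.filter (fun γ => ∑ k, s.repr γ k < ∑ k, s.repr β k) :=
          (Finset.ssubset_iff_of_subset hsubset).mpr
            ⟨β', hβ'filter, by simp⟩
        have hcard' : (R.filter (fun γ => ∑ k, s.repr γ k < ∑ k, s.repr β' k)).card < m :=
          Nat.lt_of_lt_of_le (Finset.card_lt_card hss) (Nat.lt_succ_iff.mp hcard)
        have IH := ih β' hβ'R hβ'Ri hβ'pos hcard' y hy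
        have hval : ⟪β', y⟫ = ⟪β, y⟫ - t * ⟪s j, y⟫ := by
          rw [hβ', inner_sub_left, real_inner_smul_left]
        nlinarith [hy j]
  -- main equality
  ext x
  simp only [Set.mem_iUnion, Set.mem_setOf_eq]
  constructor
  · rintro ⟨w, hw, hxC, h1, h2⟩
    exact ⟨w (s i), (by rw [hRi]; exact ⟨w, hw, rfl⟩), h1, h2⟩
  · rintro ⟨α, hα, h1, h2⟩
    have hα' := hα
    rw [hRi] at hα'
    obtain ⟨w₀, hw₀, rfl⟩ := hα'
    obtain ⟨w, hw, hyC⟩ := chamber x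
    set y := w.symm x with hy
    set u := w⁻¹ * w₀ with hu
    have huW : u ∈ W := mul_mem (inv_mem hw) hw₀
    set β := u (s i) with hβ
    have hβRi : β ∈ Ri := by rw [hRi]; exact ⟨u, huW, rfl⟩
    have hβR : β ∈ R := hWR' u huW (s i) (hsR i)
    have hβval : ⟪β, y⟫ = ⟪w₀ (s i), x⟫ := by
      have : β = w.symm (w₀ (s i)) := rfl
      rw [this, hy, w.symm.inner_map_map]
    have hwsix : ⟪w (s i), x⟫ = ⟪s i, y⟫ := key2 w (s i) x
    have hxwC : x ∈ ⇑w '' C := by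
      refine ⟨y, ?_, w.apply_symm_apply x⟩
      rw [hC]
      exact hyC
    rcases hsimple β hβR with hpos | hneg
    · have h3 := key _ β hβR hβRi hpos (Nat.lt_succ_self _) y hyC
      exact ⟨w, hw, hxwC, by rw [hwsix]; exact hyC i,
        by rw [hwsix]; linarith [hβval ▸ h3]⟩
    · -- β is a negative root; use -β
      have hβ2R : -β ∈ R := by
        have : -β ∈ ({β, -β} : Set V) := by simp
        rw [← hRred β hβR] at this
        exact this.2
      have hβ2Ri : -β ∈ Ri := by
        have h4 := hRiW β hβRi (sigmaLI β) (hσW β hβR)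
        rw [sigmaLI_apply, rootReflection] at h4
        have hββ : ⟪β, β⟫ ≠ 0 := ne_of_gt (inner_self_pos'' (hRne β hβR))
        rw [mul_div_assoc, div_self hββ, mul_one, two_smul] at h4
        have : β - (β + β) = -β := by abel
        rwa [this] at h4
      have hβ2pos : ∀ k, 0 ≤ s.repr (-β) k := by
        intro k
        rw [map_neg]
        simp only [Finsupp.coe_neg, Pi.neg_apply]
        linarith [hneg k]
      have h3 := key _ (-β) hβ2R hβ2Ri hβ2pos (Nat.lt_succ_self _) y hyC
      rw [inner_neg_left, hβval] at h3
      refine ⟨w, hw, hxwC, by rw [hwsix]; exact hyC i, ?_⟩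
      rw [hwsix]
      linarith [hyC i]
end
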